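/- Let D be the derivation of ℚ[x,y,z] with D(x)=xyz, D(y)=yz², D(z)=y²z. For every n ≥ 0, D^n(y) = y · Σ_{σ ∈ Q_n} y^{2·ap(σ)} z^{2n − 2·ap(σ)}, an identity in ℚ[x,y,z]. -/

import Mathlib

open Finset MvPolynomial

/-- Stirling permutations of order `n`, encoded as functions `Fin (2*n) → Fin (n+1)`
in one-line notation (position `i` holds the letter `σ (i) ∈ {1,…,n}`), such that each
letter `1,…,n` occurs exactly twice and all entries between the two occurrences of a
letter are larger than that letter. -/
def StirlingSet (n : ℕ) : Finset (Fin (2*n) → Fin (n+1)) :=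
  Finset.univ.filter (fun σ =>
    (∀ v : Fin (n+1), (v : ℕ) ≠ 0 →
        (Finset.univ.filter (fun i => σ i = v)).card = 2) ∧
    (∀ i j k : Fin (2*n), i < j → j < k → σ i = σ k → σ i < σ j))

/-- The letter at position `i ∈ {1,…,2n}` of a Stirling permutation, with the
convention that positions outside this range (in particular position `0`) hold `0`. -/
def sval {n : ℕ} (σ : Fin (2*n) → Fin (n+1)) (i : ℕ) : ℕ :=
  if h : 1 ≤ i ∧ i ≤ 2*n then (σ ⟨i - 1, by omega⟩ : ℕ) else 0

/-- The number of ascent-plateaus: indices `2 ≤ i ≤ 2n-1` with `σ_{i-1} < σ_i = σ_{i+1}`. -/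
def apQ {n : ℕ} (σ : Fin (2*n) → Fin (n+1)) : ℕ :=
  ((Finset.Icc 2 (2*n - 1)).filter
    (fun i => sval σ (i-1) < sval σ i ∧ sval σ i = sval σ (i+1))).card

/-- The number of left ascent-plateaus: indices `1 ≤ i ≤ 2n-1` with
`σ_{i-1} < σ_i = σ_{i+1}`, where `σ_0 = 0`. -/
def lapQ {n : ℕ} (σ : Fin (2*n) → Fin (n+1)) : ℕ :=
  ((Finset.Icc 1 (2*n - 1)).filter
    (fun i => sval σ (i-1) < sval σ i ∧ sval σ i = sval σ (i+1))).card

/-- The number of double ascents: indices `1 ≤ i ≤ 2n-1` with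
`σ_{i-1} < σ_i < σ_{i+1}`, where `σ_0 = 0`. -/
def dascQ {n : ℕ} (σ : Fin (2*n) → Fin (n+1)) : ℕ :=
  ((Finset.Icc 1 (2*n - 1)).filter
    (fun i => sval σ (i-1) < sval σ i ∧ sval σ i < sval σ (i+1))).card

/-- The number of descent-plateaus: indices `2 ≤ i ≤ 2n-1` with
`σ_{i-1} > σ_i = σ_{i+1}`. -/
def dpQ {n : ℕ} (σ : Fin (2*n) → Fin (n+1)) : ℕ :=
  ((Finset.Icc 2 (2*n - 1)).filter
    (fun i => sval σ i < sval σ (i-1) ∧ sval σ i = sval σ (i+1))).card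

/-- The number of ascents: indices `1 ≤ i ≤ 2n-1` with `σ_i < σ_{i+1}` or `i = 1`. -/
def ascQ {n : ℕ} (σ : Fin (2*n) → Fin (n+1)) : ℕ :=
  ((Finset.Icc 1 (2*n - 1)).filter
    (fun i => sval σ i < sval σ (i+1) ∨ i = 1)).card

/-- The number of plateaus: indices `1 ≤ i ≤ 2n-1` with `σ_i = σ_{i+1}`. -/
def platQ {n : ℕ} (σ : Fin (2*n) → Fin (n+1)) : ℕ :=
  ((Finset.Icc 1 (2*n - 1)).filter (fun i => sval σ i = sval σ (i+1))).card

/-- The flag ascent-plateau number: `2·ap(σ)+1` if `σ_1 = σ_2`, and `2·ap(σ)` otherwise. -/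
def fapQ {n : ℕ} (σ : Fin (2*n) → Fin (n+1)) : ℕ :=
  if 1 ≤ n ∧ sval σ 1 = sval σ 2 then 2 * apQ σ + 1 else 2 * apQ σ

lemma sval_eq {n : ℕ} (σ : Fin (2*n) → Fin (n+1)) {j : ℕ} (h1 : 1 ≤ j) (h2 : j ≤ 2*n) :
    sval σ j = (σ ⟨j - 1, by omega⟩ : ℕ) := dif_pos ⟨h1, h2⟩

lemma sval_out {n : ℕ} (σ : Fin (2*n) → Fin (n+1)) {j : ℕ} (h : j = 0 ∨ 2*n < j) :
    sval σ j = 0 := dif_neg (by omega)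

lemma sval_le {n : ℕ} (σ : Fin (2*n) → Fin (n+1)) (j : ℕ) : sval σ j ≤ n := by
  unfold sval; split
  · exact Nat.lt_succ_iff.mp (Fin.is_lt _)
  · omega

lemma sval_succ {n : ℕ} (σ : Fin (2*n) → Fin (n+1)) (i : Fin (2*n)) :
    sval σ ((i : ℕ) + 1) = (σ i : ℕ) := by
  have hi := i.isLt
  have he : (⟨(i:ℕ) + 1 - 1, by omega⟩ : Fin (2*n)) = i := Fin.ext (by simp)
  rw [sval_eq σ (by omega) (by omega), he]

lemma sval_injective {n : ℕ} {σ σ' : Fin (2*n) → Fin (n+1)}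
    (h : ∀ j, sval σ j = sval σ' j) : σ = σ' := by
  funext i
  have := h ((i : ℕ) + 1)
  rw [sval_succ, sval_succ] at this
  exact Fin.ext this

lemma mem_stirling_iff {n : ℕ} (σ : Fin (2*n) → Fin (n+1)) : σ ∈ StirlingSet n ↔
    (∀ v : ℕ, 1 ≤ v → v ≤ n →
      ((Finset.Icc 1 (2*n)).filter (fun j => sval σ j = v)).card = 2) ∧
    (∀ i j k : ℕ, 1 ≤ i → i < j → j < k → k ≤ 2*n →
      sval σ i = sval σ k → sval σ i < sval σ j) := by
  unfold StirlingSet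
  rw [mem_filter]
  simp only [mem_univ, true_and]
  have hcard : ∀ v : Fin (n+1),
      (Finset.univ.filter (fun i => σ i = v)).card
        = ((Finset.Icc 1 (2*n)).filter (fun j => sval σ j = (v : ℕ))).card := by
    intro v
    refine Finset.card_bij (fun i _ => (i : ℕ) + 1) ?_ ?_ ?_
    · intro a ha
      beta_reduce
      rw [mem_filter] at ha ⊢
      have := a.isLt
      refine ⟨by rw [mem_Icc]; omega, ?_⟩
      rw [sval_succ, ha.2]
    · intro a _ b _ hab
      beta_reduce at hab
      exact Fin.ext (by omega)
    · intro b hb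
      rw [mem_filter, mem_Icc] at hb
      refine ⟨⟨b - 1, by omega⟩, ?_, by beta_reduce; simp only [Fin.val_mk]; omega⟩
      rw [mem_filter]
      refine ⟨mem_univ _, ?_⟩
      rw [sval_eq σ (by omega) (by omega)] at hb
      exact Fin.ext hb.2
  constructor
  · rintro ⟨h1, h2⟩
    constructor
    · intro v hv1 hv2
      rw [← hcard ⟨v, by omega⟩]
      exact h1 ⟨v, by omega⟩ (by simp; omega)
    · intro i j k hi hij hjk hk heq
      rw [sval_eq σ hi (show i ≤ 2*n by omega),
        sval_eq σ (show 1 ≤ j by omega) (show j ≤ 2*n by omega)]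
      rw [sval_eq σ hi (show i ≤ 2*n by omega),
        sval_eq σ (show 1 ≤ k by omega) hk] at heq
      exact h2 _ _ _ (Fin.mk_lt_mk.mpr (by omega)) (Fin.mk_lt_mk.mpr (by omega)) (Fin.ext heq)
  · rintro ⟨h1, h2⟩
    constructor
    · intro v hv
      rw [hcard v]
      have := v.isLt
      exact h1 (v : ℕ) (by omega) (by omega)
    · intro i j k hij hjk heq
      have hi := i.isLt; have hj := j.isLt; have hk := k.isLt
      rw [Fin.lt_def] at hij hjk ⊢
      have := h2 ((i:ℕ)+1) ((j:ℕ)+1) ((k:ℕ)+1) (by omega) (by omega) (by omega) (by omega)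
        (by rw [sval_succ, sval_succ]; exact_mod_cast congrArg Fin.val heq)
      rw [sval_succ, sval_succ] at this
      exact this

def apSet {n : ℕ} (σ : Fin (2*n) → Fin (n+1)) : Finset ℕ :=
  (Finset.Icc 2 (2*n - 1)).filter
    (fun i => sval σ (i-1) < sval σ i ∧ sval σ i = sval σ (i+1))

lemma apQ_eq_card {n : ℕ} (σ : Fin (2*n) → Fin (n+1)) : apQ σ = (apSet σ).card := rfl

lemma mem_apSet_iff {n : ℕ} (σ : Fin (2*n) → Fin (n+1)) (i : ℕ) :
    i ∈ apSet σ ↔ 2 ≤ i ∧ i ≤ 2*n - 1 ∧ sval σ (i-1) < sval σ i ∧ sval σ i = sval σ (i+1) := by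
  unfold apSet
  rw [Finset.mem_filter, Finset.mem_Icc]
  tauto

lemma sval_pos {n : ℕ} {σ : Fin (2*n) → Fin (n+1)} (hσ : σ ∈ StirlingSet n)
    {j : ℕ} (h1 : 1 ≤ j) (h2 : j ≤ 2*n) : 1 ≤ sval σ j := by
  rw [mem_stirling_iff] at hσ
  by_contra h
  -- the fiber over 0 is empty by counting
  have hcount : ∀ v : ℕ, 1 ≤ v → v ≤ n →
      ((Finset.Icc 1 (2*n)).filter (fun j => sval σ j = v)).card = 2 := hσ.1
  -- total: sum over v in Icc 1 n of fibers plus fiber of 0 = 2n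
  have htot : ((Finset.Icc 1 (2*n)).filter (fun j => 1 ≤ sval σ j)).card
      = ∑ v ∈ Finset.Icc 1 n,
          (((Finset.Icc 1 (2*n)).filter (fun j => 1 ≤ sval σ j)).filter
            (fun j => sval σ j = v)).card := by
    apply Finset.card_eq_sum_card_fiberwise (f := fun j => sval σ j)
    intro x hx
    rw [Finset.mem_coe, Finset.mem_filter] at hx
    rw [Finset.mem_coe, Finset.mem_Icc]
    exact ⟨hx.2, sval_le σ x⟩
  have hfib : ∀ v ∈ Finset.Icc 1 n,
      (((Finset.Icc 1 (2*n)).filter (fun j => 1 ≤ sval σ j)).filter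
        (fun j => sval σ j = v)).card = 2 := by
    intro v hv
    rw [Finset.mem_Icc] at hv
    rw [Finset.filter_filter]
    have heqs : (Finset.Icc 1 (2*n)).filter (fun a => 1 ≤ sval σ a ∧ sval σ a = v)
        = (Finset.Icc 1 (2*n)).filter (fun j => sval σ j = v) := by
      apply Finset.filter_congr
      intro x _
      constructor
      · exact fun hh => hh.2
      · exact fun hh => ⟨by omega, hh⟩
    rw [heqs]
    exact hcount v hv.1 hv.2
  have hsum : ((Finset.Icc 1 (2*n)).filter (fun j => 1 ≤ sval σ j)).card = 2 * n := by
    rw [htot, Finset.sum_congr rfl hfib, Finset.sum_const, Nat.card_Icc, smul_eq_mul]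
    omega
  have hle : ((Finset.Icc 1 (2*n)).filter (fun j => 1 ≤ sval σ j)).card < 2*n := by
    have hss : (Finset.Icc 1 (2*n)).filter (fun j => 1 ≤ sval σ j) ⊆
        (Finset.Icc 1 (2*n)).erase j := by
      intro x hx
      rw [Finset.mem_filter] at hx
      rw [Finset.mem_erase]
      refine ⟨?_, hx.1⟩
      rintro rfl
      omega
    calc ((Finset.Icc 1 (2*n)).filter (fun j => 1 ≤ sval σ j)).card
        ≤ ((Finset.Icc 1 (2*n)).erase j).card := Finset.card_le_card hss
      _ < (Finset.Icc 1 (2*n)).card := Finset.card_erase_lt_of_mem (by rw [Finset.mem_Icc]; omega)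
      _ = 2*n := by simp [Nat.card_Icc]
  omega

lemma no_triple {n : ℕ} {σ : Fin (2*n) → Fin (n+1)} (hσ : σ ∈ StirlingSet n)
    {p q r : ℕ} (h1 : 1 ≤ p) (hpq : p < q) (hqr : q < r) (hr : r ≤ 2*n)
    (e1 : sval σ p = sval σ q) (e2 : sval σ q = sval σ r) : False := by
  have hpos := sval_pos hσ h1 (by omega)
  have hv := sval_le σ p
  have hmem := (mem_stirling_iff σ).mp hσ
  have hcard := hmem.1 (sval σ p) hpos hv
  have hsub : ({p, q, r} : Finset ℕ) ⊆
      (Finset.Icc 1 (2*n)).filter (fun j => sval σ j = sval σ p) := by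
    intro x hx
    simp only [Finset.mem_insert, Finset.mem_singleton] at hx
    rw [Finset.mem_filter, Finset.mem_Icc]
    rcases hx with rfl | rfl | rfl
    · exact ⟨⟨by omega, by omega⟩, rfl⟩
    · exact ⟨⟨by omega, by omega⟩, e1.symm⟩
    · exact ⟨⟨by omega, by omega⟩, (e1.trans e2).symm⟩
  have hc3 : ({p, q, r} : Finset ℕ).card = 3 := by
    rw [Finset.card_insert_of_notMem (by simp; omega),
      Finset.card_insert_of_notMem (by simp; omega), Finset.card_singleton]
  have := Finset.card_le_card hsub
  omega

lemma no_adjacent {n : ℕ} {σ : Fin (2*n) → Fin (n+1)} (hσ : σ ∈ StirlingSet n)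
    {i : ℕ} (hi : i ∈ apSet σ) : i + 1 ∉ apSet σ := by
  intro hi1
  rw [mem_apSet_iff] at hi hi1
  exact no_triple hσ (show 1 ≤ i by omega) (show i < i+1 by omega) (show i+1 < i+2 by omega)
    (show i+2 ≤ 2*n by omega) hi.2.2.2 hi1.2.2.2

lemma apQ_le {n : ℕ} {σ : Fin (2*n) → Fin (n+1)} (hσ : σ ∈ StirlingSet n) : apQ σ ≤ n := by
  rw [apQ_eq_card]
  have : (apSet σ).card ≤ (Finset.Icc 1 n).card := by
    apply Finset.card_le_card_of_injOn (fun i => sval σ i)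
    · intro i hi
      rw [Finset.mem_coe, mem_apSet_iff] at hi
      rw [Finset.mem_coe, Finset.mem_Icc]
      exact ⟨sval_pos hσ (by omega) (by omega), sval_le σ i⟩
    · intro a ha b hb hab
      beta_reduce at hab
      rw [Finset.mem_coe, mem_apSet_iff] at ha hb
      by_contra hne
      rcases Nat.lt_or_ge a b with h | h
      · rcases Nat.lt_or_ge (a+1) b with h2 | h2
        · exact no_triple hσ (show 1 ≤ a by omega) (show a < a+1 by omega) h2
            (by omega) ha.2.2.2 (by rw [← ha.2.2.2, hab])
        · have hb1 : b = a + 1 := by omega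
          subst hb1
          exact no_triple hσ (show 1 ≤ a by omega) (show a < a+1 by omega)
            (show a+1 < a+2 by omega) (by omega) ha.2.2.2 hb.2.2.2
      · rcases Nat.lt_or_ge b a with h' | h'
        · rcases Nat.lt_or_ge (b+1) a with h2 | h2
          · exact no_triple hσ (show 1 ≤ b by omega) (show b < b+1 by omega) h2
              (by omega) hb.2.2.2 (by rw [← hb.2.2.2, ← hab])
          · have hb1 : a = b + 1 := by omega
            subst hb1
            exact no_triple hσ (show 1 ≤ b by omega) (show b < b+1 by omega)
              (show b+1 < b+2 by omega) (by omega) hb.2.2.2 ha.2.2.2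
        · omega
  simpa [Nat.card_Icc] using this

def ins {n : ℕ} (σ : Fin (2*n) → Fin (n+1)) (g : ℕ) : Fin (2*(n+1)) → Fin (n+2) :=
  fun i =>
    if h1 : (i : ℕ) < g ∧ (i : ℕ) < 2*n then (σ ⟨i, h1.2⟩).castSucc
    else if h2 : (i : ℕ) < g + 2 then Fin.last (n+1)
    else (σ ⟨(i : ℕ) - 2, by have := i.isLt; omega⟩).castSucc

lemma sval_ins {n : ℕ} (σ : Fin (2*n) → Fin (n+1)) {g : ℕ} (hg : g ≤ 2*n) (j : ℕ) :
    sval (ins σ g) j =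
      if j ≤ g then sval σ j else if j ≤ g + 2 then n + 1 else sval σ (j - 2) := by
  rcases Nat.eq_zero_or_pos j with rfl | hj
  · rw [sval_out (ins σ g) (Or.inl rfl), if_pos (Nat.zero_le g), sval_out σ (Or.inl rfl)]
  rcases Nat.lt_or_ge (2*(n+1)) j with hbig | hsm
  · rw [sval_out (ins σ g) (Or.inr hbig)]
    rw [if_neg (by omega), if_neg (by omega), sval_out σ (Or.inr (by omega))]
  · -- 1 ≤ j ≤ 2n+2
    rw [sval_eq (ins σ g) hj hsm]
    unfold ins
    rcases Nat.lt_or_ge (j-1) g with hc1 | hc1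
    · rw [dif_pos (show ((⟨j-1, by omega⟩ : Fin (2*(n+1))) : ℕ) < g ∧
          ((⟨j-1, by omega⟩ : Fin (2*(n+1))) : ℕ) < 2*n from
            ⟨by simp only [Fin.val_mk]; omega, by simp only [Fin.val_mk]; omega⟩)]
      rw [if_pos (show j ≤ g by omega)]
      rw [sval_eq σ hj (by omega)]
      simp [Fin.castSucc]
    · rcases Nat.lt_or_ge (j-1) (g+2) with hc2 | hc2
      · rw [dif_neg (by simp only [Fin.val_mk]; omega),
          dif_pos (by simp only [Fin.val_mk]; omega)]
        rw [if_neg (by omega), if_pos (by omega)]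
        simp [Fin.last]
      · rw [dif_neg (by simp only [Fin.val_mk]; omega), dif_neg (by simp only [Fin.val_mk]; omega)]
        rw [if_neg (by omega), if_neg (by omega)]
        rw [sval_eq σ (by omega) (by omega)]
        simp only [Fin.coe_castSucc]
        congr 2 <;> first
          | (simp only [Fin.val_mk]; omega)
          | rfl

lemma mem_apSet_ins {n : ℕ} (σ : Fin (2*n) → Fin (n+1)) {g : ℕ} (hg : g ≤ 2*n) (j : ℕ) :
    j ∈ apSet (ins σ g) ↔
      (j < g ∧ j ∈ apSet σ) ∨ (1 ≤ g ∧ j = g + 1) ∨ (g + 4 ≤ j ∧ j - 2 ∈ apSet σ) := by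
  have hle := sval_le σ
  rw [mem_apSet_iff]
  simp only [sval_ins σ hg]
  rcases (by omega : j + 1 ≤ g ∨ j = g ∨ j = g+1 ∨ j = g+2 ∨ j = g+3 ∨ g+4 ≤ j)
    with hr | hr | hr | hr | hr | hr
  · rw [if_pos (show j-1 ≤ g by omega), if_pos (show j ≤ g by omega),
      if_pos (show j+1 ≤ g by omega)]
    constructor
    · rintro ⟨h2, h3, hC⟩
      exact Or.inl ⟨by omega, (mem_apSet_iff σ j).mpr ⟨h2, by omega, hC⟩⟩
    · rintro (⟨hjg, hj⟩ | ⟨hg1, rfl⟩ | ⟨h4, _⟩)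
      · obtain ⟨h2, h3, hC⟩ := (mem_apSet_iff σ j).mp hj
        exact ⟨h2, by omega, hC⟩
      · omega
      · omega
  · subst hr
    rw [if_pos (show j-1 ≤ j by omega), if_pos (show j ≤ j by omega),
      if_neg (show ¬ (j+1 ≤ j) by omega), if_pos (show j+1 ≤ j+2 by omega)]
    constructor
    · rintro ⟨h2, h3, hC1, hC2⟩
      exfalso
      have := hle j
      omega
    · rintro (⟨h, _⟩ | ⟨h, he⟩ | ⟨h, _⟩) <;> omega
  · subst hr
    rw [if_pos (show g+1-1 ≤ g by omega), if_neg (show ¬ (g+1 ≤ g) by omega),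
      if_pos (show g+1 ≤ g+2 by omega), if_neg (show ¬ (g+1+1 ≤ g) by omega),
      if_pos (show g+1+1 ≤ g+2 by omega)]
    constructor
    · rintro ⟨h2, h3, _⟩
      exact Or.inr (Or.inl ⟨by omega, rfl⟩)
    · rintro (⟨h, _⟩ | ⟨h1, _⟩ | ⟨h, _⟩)
      · omega
      · refine ⟨by omega, by omega, ?_, rfl⟩
        have := hle (g+1-1)
        omega
      · omega
  · subst hr
    rw [if_neg (show ¬ (g+2-1 ≤ g) by omega), if_pos (show g+2-1 ≤ g+2 by omega),
      if_neg (show ¬ (g+2 ≤ g) by omega), if_pos (show g+2 ≤ g+2 by omega)]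
    constructor
    · rintro ⟨h2, h3, hC1, _⟩
      omega
    · rintro (⟨h, _⟩ | ⟨h, he⟩ | ⟨h, _⟩) <;> omega
  · subst hr
    rw [if_neg (show ¬ (g+3-1 ≤ g) by omega), if_pos (show g+3-1 ≤ g+2 by omega),
      if_neg (show ¬ (g+3 ≤ g) by omega), if_neg (show ¬ (g+3 ≤ g+2) by omega)]
    constructor
    · rintro ⟨h2, h3, hC1, _⟩
      exfalso
      have := hle (g+3-2)
      omega
    · rintro (⟨h, _⟩ | ⟨h, he⟩ | ⟨h, _⟩) <;> omega
  · rw [if_neg (show ¬ (j-1 ≤ g) by omega), if_neg (show ¬ (j-1 ≤ g+2) by omega),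
      if_neg (show ¬ (j ≤ g) by omega), if_neg (show ¬ (j ≤ g+2) by omega),
      if_neg (show ¬ (j+1 ≤ g) by omega), if_neg (show ¬ (j+1 ≤ g+2) by omega)]
    rw [show j-1-2 = j-3 by omega, show j+1-2 = j-1 by omega]
    constructor
    · rintro ⟨h2, h3, hC1, hC2⟩
      refine Or.inr (Or.inr ⟨hr, (mem_apSet_iff σ (j-2)).mpr ⟨by omega, by omega, ?_, ?_⟩⟩)
      · rw [show j-2-1 = j-3 by omega]
        exact hC1
      · rw [show j-2+1 = j-1 by omega]
        exact hC2
    · rintro (⟨h, _⟩ | ⟨h, he⟩ | ⟨h, hmem⟩)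
      · omega
      · omega
      · obtain ⟨h2, h3, hC1, hC2⟩ := (mem_apSet_iff σ (j-2)).mp hmem
        rw [show j-2-1 = j-3 by omega] at hC1
        rw [show j-2+1 = j-1 by omega] at hC2
        exact ⟨by omega, by omega, hC1, hC2⟩

def nset {n : ℕ} (σ : Fin (2*n) → Fin (n+1)) : Finset ℕ :=
  insert 0 ((apSet σ).biUnion (fun i => {i-1, i}))

lemma mem_nset {n : ℕ} (σ : Fin (2*n) → Fin (n+1)) (g : ℕ) :
    g ∈ nset σ ↔ g = 0 ∨ ∃ i ∈ apSet σ, g = i - 1 ∨ g = i := by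
  unfold nset
  simp only [Finset.mem_insert, Finset.mem_biUnion, Finset.mem_singleton]

lemma card_nset {n : ℕ} {σ : Fin (2*n) → Fin (n+1)} (hσ : σ ∈ StirlingSet n) :
    (nset σ).card = 2 * apQ σ + 1 := by
  unfold nset
  rw [Finset.card_insert_of_notMem, Finset.card_biUnion]
  · rw [Finset.sum_congr rfl (fun i hi => show ({i-1, i} : Finset ℕ).card = 2 by
      rw [Finset.card_insert_of_notMem (by
        rw [Finset.mem_singleton]
        rw [mem_apSet_iff] at hi
        omega), Finset.card_singleton])]
    rw [Finset.sum_const, smul_eq_mul, apQ_eq_card]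
    ring
  · intro x hx y hy hxy
    rw [Function.onFun, Finset.disjoint_left]
    intro a hax hay
    rw [Finset.mem_insert, Finset.mem_singleton] at hax hay
    have hx2 : 2 ≤ x := ((mem_apSet_iff σ x).mp hx).1
    have hy2 : 2 ≤ y := ((mem_apSet_iff σ y).mp hy).1
    rcases (by omega : x = y + 1 ∨ y = x + 1) with h | h
    · exact no_adjacent hσ hy (h ▸ hx)
    · exact no_adjacent hσ hx (h ▸ hy)
  · rw [Finset.mem_biUnion]
    rintro ⟨i, hi, hmem⟩
    rw [Finset.mem_insert, Finset.mem_singleton] at hmem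
    have : 2 ≤ i := ((mem_apSet_iff σ i).mp hi).1
    omega

lemma nset_subset {n : ℕ} (σ : Fin (2*n) → Fin (n+1)) :
    nset σ ⊆ Finset.range (2*n + 1) := by
  intro g hg
  rw [mem_nset] at hg
  rw [Finset.mem_range]
  rcases hg with rfl | ⟨i, hi, hcase⟩
  · omega
  · have := ((mem_apSet_iff σ i).mp hi).2.1
    omega

lemma apQ_ins {n : ℕ} {σ : Fin (2*n) → Fin (n+1)} (hσ : σ ∈ StirlingSet n)
    {g : ℕ} (hg : g ≤ 2*n) :
    apQ (ins σ g) = if g ∈ nset σ then apQ σ else apQ σ + 1 := by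
  -- decompose the apSet of the insertion
  have hset : apSet (ins σ g) =
      ((apSet σ).filter (fun i => i < g)) ∪
        ((if 1 ≤ g then ({g+1} : Finset ℕ) else ∅) ∪
          ((apSet σ).filter (fun i => g + 2 ≤ i)).image (fun i => i + 2)) := by
    ext j
    rw [mem_apSet_ins σ hg]
    simp only [Finset.mem_union, Finset.mem_filter, Finset.mem_image]
    constructor
    · rintro (⟨h1, h2⟩ | ⟨h1, h2⟩ | ⟨h1, h2⟩)
      · exact Or.inl ⟨h2, h1⟩
      · refine Or.inr (Or.inl ?_)
        rw [if_pos h1, Finset.mem_singleton]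
        exact h2
      · exact Or.inr (Or.inr ⟨j - 2, ⟨h2, by omega⟩, by omega⟩)
    · rintro (⟨h1, h2⟩ | h | ⟨i, ⟨hi1, hi2⟩, rfl⟩)
      · exact Or.inl ⟨h2, h1⟩
      · split at h
        · rw [Finset.mem_singleton] at h
          exact Or.inr (Or.inl ⟨by assumption, h⟩)
        · exact absurd h (Finset.notMem_empty j)
      · exact Or.inr (Or.inr ⟨by omega, by rw [show i + 2 - 2 = i by omega]; exact hi1⟩)
  -- cardinalities
  have hcard : apQ (ins σ g) =
      ((apSet σ).filter (fun i => i < g)).card + (if 1 ≤ g then 1 else 0) +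
        ((apSet σ).filter (fun i => g + 2 ≤ i)).card := by
    rw [apQ_eq_card, hset]
    rw [Finset.card_union_of_disjoint, Finset.card_union_of_disjoint,
      Finset.card_image_of_injective _ (fun a b h => by omega)]
    · split
      · rw [Finset.card_singleton]; ring
      · rw [Finset.card_empty]; ring
    · rw [Finset.disjoint_left]
      intro a ha hb
      split at ha
      · rw [Finset.mem_singleton] at ha
        rw [Finset.mem_image] at hb
        obtain ⟨i, hi, he⟩ := hb
        rw [Finset.mem_filter] at hi
        omega
      · exact absurd ha (Finset.notMem_empty a)
    · rw [Finset.disjoint_left]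
      intro a ha hb
      rw [Finset.mem_filter] at ha
      rw [Finset.mem_union] at hb
      rcases hb with hb | hb
      · split at hb
        · rw [Finset.mem_singleton] at hb
          omega
        · exact absurd hb (Finset.notMem_empty a)
      · rw [Finset.mem_image] at hb
        obtain ⟨i, hi, he⟩ := hb
        rw [Finset.mem_filter] at hi
        omega
  -- the three-way split of apSet σ
  have h1 := Finset.card_filter_add_card_filter_not
    (s := apSet σ) (p := fun i => i < g)
  have h2 := Finset.card_filter_add_card_filter_not
    (s := (apSet σ).filter (fun i => ¬ i < g)) (p := fun i => i ≤ g + 1)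
  rw [Finset.filter_filter, Finset.filter_filter] at h2
  have he1 : (apSet σ).filter (fun i => ¬ i < g ∧ i ≤ g + 1)
      = (apSet σ).filter (fun i => g ≤ i ∧ i ≤ g + 1) :=
    Finset.filter_congr (fun x _ => by constructor <;> (intro hh; exact ⟨by omega, hh.2⟩))
  have he2 : (apSet σ).filter (fun i => ¬ i < g ∧ ¬ i ≤ g + 1)
      = (apSet σ).filter (fun i => g + 2 ≤ i) :=
    Finset.filter_congr (fun x _ => by constructor <;> (intro hh; first | exact (by omega) | omega))
  rw [he1, he2] at h2
  -- middle cardinality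
  by_cases hn : g ∈ nset σ
  · rw [if_pos hn]
    rw [mem_nset] at hn
    rcases hn with rfl | ⟨i₀, hi₀, hcase⟩
    · -- g = 0
      rw [hcard]
      rw [if_neg (by omega)]
      have hlow : (apSet σ).filter (fun i => i < 0) = ∅ :=
        Finset.filter_false_of_mem (fun x _ => by omega)
      have hhigh : (apSet σ).filter (fun i => 0 + 2 ≤ i) = apSet σ :=
        Finset.filter_true_of_mem (fun x hx => by
          have := ((mem_apSet_iff σ x).mp hx).1; omega)
      rw [hlow, hhigh, Finset.card_empty, apQ_eq_card]
      omega
    · have hg1 : 1 ≤ g := by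
        have h2i := ((mem_apSet_iff σ i₀).mp hi₀).1
        omega
      have hmid : (apSet σ).filter (fun i => g ≤ i ∧ i ≤ g + 1) = {i₀} := by
        ext x
        rw [Finset.mem_filter, Finset.mem_singleton]
        constructor
        · rintro ⟨hx, hx1, hx2⟩
          by_contra hne
          have h2i := ((mem_apSet_iff σ i₀).mp hi₀).1
          rcases (by omega : x = i₀ + 1 ∨ i₀ = x + 1) with h | h
          · exact no_adjacent hσ hi₀ (h ▸ hx)
          · exact no_adjacent hσ hx (h ▸ hi₀)
        · intro hxe
          have h2i := ((mem_apSet_iff σ i₀).mp hi₀).1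
          refine ⟨by rw [hxe]; exact hi₀, by omega, by omega⟩
      rw [hcard, if_pos hg1]
      rw [hmid, Finset.card_singleton] at h2
      rw [apQ_eq_card]
      omega
  · rw [if_neg hn]
    rw [mem_nset] at hn
    push_neg at hn
    have hmid : (apSet σ).filter (fun i => g ≤ i ∧ i ≤ g + 1) = ∅ := by
      apply Finset.filter_false_of_mem
      intro x hx
      rintro ⟨hx1, hx2⟩
      rcases (by omega : g = x ∨ g = x - 1) with h | h
      · exact (hn.2 x hx).2 h
      · exact (hn.2 x hx).1 h
    rw [hmid, Finset.card_empty] at h2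
    rw [hcard, if_pos (by omega)]
    rw [apQ_eq_card]
    omega

lemma sum_gaps {M : Type} [AddCommMonoid M] {n : ℕ} {σ : Fin (2*n) → Fin (n+1)}
    (hσ : σ ∈ StirlingSet n) (F : ℕ → M) :
    ∑ g ∈ Finset.range (2*n + 1), F (apQ (ins σ g)) =
      (2 * apQ σ + 1) • F (apQ σ) + (2*n - 2 * apQ σ) • F (apQ σ + 1) := by
  have hsummand : ∀ g ∈ Finset.range (2*n + 1),
      F (apQ (ins σ g)) = if g ∈ nset σ then F (apQ σ) else F (apQ σ + 1) := by
    intro g hg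
    rw [Finset.mem_range] at hg
    rw [apQ_ins hσ (by omega)]
    split <;> rfl
  rw [Finset.sum_congr rfl hsummand, Finset.sum_ite, Finset.sum_const, Finset.sum_const]
  have hpos : (Finset.range (2*n+1)).filter (fun g => g ∈ nset σ) = nset σ := by
    rw [Finset.filter_mem_eq_inter, Finset.inter_eq_right]
    exact nset_subset σ
  have hnegcard : ((Finset.range (2*n+1)).filter (fun g => g ∉ nset σ)).card = 2*n - 2*apQ σ := by
    have := Finset.card_filter_add_card_filter_not
      (s := Finset.range (2*n+1)) (p := fun g => g ∈ nset σ)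
    rw [hpos, card_nset hσ] at this
    rw [Finset.card_range] at this
    omega
  rw [hpos, hnegcard, card_nset hσ]

noncomputable def gapIdx {n : ℕ} (τ : Fin (2*(n+1)) → Fin (n+2)) : ℕ :=
  sInf {j | sval τ j = n+1} - 1

lemma gapIdx_eq {n : ℕ} {τ : Fin (2*(n+1)) → Fin (n+2)} {g : ℕ}
    (hP : ∀ j, sval τ j = n+1 ↔ (j = g+1 ∨ j = g+2)) : gapIdx τ = g := by
  have h1 : (g+1 : ℕ) ∈ {j | sval τ j = n+1} := (hP (g+1)).mpr (Or.inl rfl)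
  have hle : sInf {j | sval τ j = n+1} ≤ g+1 := Nat.sInf_le h1
  have hmem := Nat.sInf_mem (⟨g+1, h1⟩ : Set.Nonempty {j | sval τ j = n+1})
  rw [Set.mem_setOf_eq, hP] at hmem
  unfold gapIdx
  omega

noncomputable def delF {n : ℕ} (τ : Fin (2*(n+1)) → Fin (n+2)) : Fin (2*n) → Fin (n+1) :=
  fun i => ⟨min (if (i:ℕ)+1 ≤ gapIdx τ then sval τ ((i:ℕ)+1) else sval τ ((i:ℕ)+3)) n,
    Nat.lt_succ_of_le (min_le_right _ _)⟩

lemma sval_delF {n : ℕ} {τ : Fin (2*(n+1)) → Fin (n+2)} {g : ℕ} (hg : g ≤ 2*n)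
    (hP : ∀ j, sval τ j = n+1 ↔ (j = g+1 ∨ j = g+2)) (j : ℕ) :
    sval (delF τ) j =
      if 1 ≤ j ∧ j ≤ 2*n then (if j ≤ g then sval τ j else sval τ (j+2)) else 0 := by
  have hgap : gapIdx τ = g := gapIdx_eq hP
  have hlen : ∀ m, sval τ m ≤ n+1 := sval_le τ
  by_cases hj : 1 ≤ j ∧ j ≤ 2*n
  · rw [if_pos hj]
    rw [sval_eq (delF τ) hj.1 hj.2]
    show min (if (j-1)+1 ≤ gapIdx τ then sval τ ((j-1)+1) else sval τ ((j-1)+3)) n = _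
    rw [hgap, show (j-1)+1 = j by omega, show (j-1)+3 = j+2 by omega]
    by_cases hc : j ≤ g
    · rw [if_pos hc]
      have h1 : sval τ j ≠ n+1 := fun hcon => by
        rw [hP] at hcon
        omega
      have h2 := hlen j
      exact min_eq_left (by omega)
    · rw [if_neg hc]
      have h1 : sval τ (j+2) ≠ n+1 := fun hcon => by
        rw [hP] at hcon
        omega
      have h2 := hlen (j+2)
      exact min_eq_left (by omega)
  · rw [if_neg hj, sval_out (delF τ) (by omega)]

lemma pair_of_mem {n : ℕ} {τ : Fin (2*(n+1)) → Fin (n+2)} (hτ : τ ∈ StirlingSet (n+1)) :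
    ∃ g ≤ 2*n, ∀ j, sval τ j = n+1 ↔ (j = g+1 ∨ j = g+2) := by
  have hmem := (mem_stirling_iff τ).mp hτ
  have hcard := hmem.1 (n+1) (by omega) (by omega)
  obtain ⟨p, q, hpq, hset⟩ := Finset.card_eq_two.mp hcard
  have hne : p ≠ q := hpq
  have hset2 : (Finset.Icc 1 (2*(n+1))).filter (fun j => sval τ j = n+1)
      = {min p q, max p q} := by
    rw [hset]
    ext x
    simp only [Finset.mem_insert, Finset.mem_singleton]
    omega
  have hamem : min p q ∈ (Finset.Icc 1 (2*(n+1))).filter (fun j => sval τ j = n+1) := by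
    rw [hset2]
    simp
  have hbmem : max p q ∈ (Finset.Icc 1 (2*(n+1))).filter (fun j => sval τ j = n+1) := by
    rw [hset2]
    simp
  rw [Finset.mem_filter, Finset.mem_Icc] at hamem hbmem
  have hab : min p q < max p q := by omega
  have hadj : max p q = min p q + 1 := by
    by_contra hcon
    have hord := hmem.2 (min p q) (min p q + 1) (max p q) (by omega) (by omega) (by omega)
      (by omega) (by rw [hamem.2, hbmem.2])
    have := sval_le τ (min p q + 1)
    omega
  refine ⟨min p q - 1, by omega, ?_⟩
  intro j
  constructor
  · intro hj
    have hjr : 1 ≤ j ∧ j ≤ 2*(n+1) := by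
      by_contra hcon
      rw [sval_out τ (by omega)] at hj
      omega
    have : j ∈ ({min p q, max p q} : Finset ℕ) := by
      rw [← hset2, Finset.mem_filter, Finset.mem_Icc]
      exact ⟨hjr, hj⟩
    simp only [Finset.mem_insert, Finset.mem_singleton] at this
    omega
  · intro hj
    rcases hj with hj | hj
    · rw [show j = min p q by omega]
      exact hamem.2
    · rw [show j = max p q by omega]
      exact hbmem.2

lemma pair_ins {n : ℕ} (σ : Fin (2*n) → Fin (n+1)) {g : ℕ} (hg : g ≤ 2*n) (j : ℕ) :
    sval (ins σ g) j = n+1 ↔ (j = g+1 ∨ j = g+2) := by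
  rw [sval_ins σ hg]
  rcases (by omega : j ≤ g ∨ (g+1 ≤ j ∧ j ≤ g+2) ∨ g+3 ≤ j) with h | h | h
  · rw [if_pos h]
    have := sval_le σ j
    omega
  · rw [if_neg (by omega), if_pos (by omega)]
    omega
  · rw [if_neg (by omega), if_neg (by omega)]
    have := sval_le σ (j-2)
    omega

lemma gap_ins {n : ℕ} (σ : Fin (2*n) → Fin (n+1)) {g : ℕ} (hg : g ≤ 2*n) :
    gapIdx (ins σ g) = g := gapIdx_eq (pair_ins σ hg)

lemma delF_ins {n : ℕ} (σ : Fin (2*n) → Fin (n+1)) {g : ℕ} (hg : g ≤ 2*n) :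
    delF (ins σ g) = σ := by
  apply sval_injective
  intro j
  rw [sval_delF hg (pair_ins σ hg) j]
  by_cases hj : 1 ≤ j ∧ j ≤ 2*n
  · rw [if_pos hj]
    by_cases hc : j ≤ g
    · rw [if_pos hc, sval_ins σ hg, if_pos hc]
    · rw [if_neg hc, sval_ins σ hg, if_neg (by omega), if_neg (by omega),
        show j+2-2 = j by omega]
  · rw [if_neg hj, sval_out σ (by omega)]

lemma ins_delF {n : ℕ} {τ : Fin (2*(n+1)) → Fin (n+2)} {g : ℕ} (hg : g ≤ 2*n)
    (hP : ∀ j, sval τ j = n+1 ↔ (j = g+1 ∨ j = g+2)) :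
    ins (delF τ) g = τ := by
  apply sval_injective
  intro j
  rw [sval_ins (delF τ) hg j]
  rcases (by omega : j ≤ g ∨ (g+1 ≤ j ∧ j ≤ g+2) ∨ g+3 ≤ j) with h | h | h
  · rw [if_pos h, sval_delF hg hP j]
    by_cases hj : 1 ≤ j
    · rw [if_pos ⟨hj, by omega⟩, if_pos h]
    · rw [if_neg (by omega), sval_out τ (by omega)]
  · rw [if_neg (by omega), if_pos (by omega)]
    exact ((hP j).mpr (by omega)).symm
  · rw [if_neg (by omega), if_neg (by omega), sval_delF hg hP (j-2)]
    by_cases hj : j ≤ 2*n + 2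
    · rw [if_pos ⟨by omega, by omega⟩, if_neg (by omega), show j-2+2 = j by omega]
    · rw [if_neg (by omega), sval_out τ (by omega)]

lemma ins_mem {n : ℕ} {σ : Fin (2*n) → Fin (n+1)} (hσ : σ ∈ StirlingSet n)
    {g : ℕ} (hg : g ≤ 2*n) : ins σ g ∈ StirlingSet (n+1) := by
  have hmem := (mem_stirling_iff σ).mp hσ
  rw [mem_stirling_iff]
  constructor
  · intro v hv1 hv2
    rcases (by omega : v ≤ n ∨ v = n+1) with hvn | hvn
    · have hbij : ((Finset.Icc 1 (2*n)).filter (fun j => sval σ j = v)).card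
          = ((Finset.Icc 1 (2*(n+1))).filter (fun j => sval (ins σ g) j = v)).card := by
        apply Finset.card_bij (fun j _ => if j ≤ g then j else j + 2)
        · intro a ha
          rw [Finset.mem_filter, Finset.mem_Icc] at ha
          rw [Finset.mem_filter, Finset.mem_Icc]
          by_cases hc : a ≤ g
          · rw [if_pos hc, sval_ins σ hg, if_pos hc]
            exact ⟨⟨by omega, by omega⟩, ha.2⟩
          · rw [if_neg hc, sval_ins σ hg, if_neg (by omega), if_neg (by omega),
              show a+2-2 = a by omega]
            exact ⟨⟨by omega, by omega⟩, ha.2⟩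
        · intro a ha b hb hab
          beta_reduce at hab
          split_ifs at hab <;> omega
        · intro b hb
          rw [Finset.mem_filter, Finset.mem_Icc] at hb
          obtain ⟨⟨hb1, hb2⟩, hbv⟩ := hb
          rw [sval_ins σ hg] at hbv
          rcases (by omega : b ≤ g ∨ (g+1 ≤ b ∧ b ≤ g+2) ∨ g+3 ≤ b) with h | h | h
          · rw [if_pos h] at hbv
            refine ⟨b, ?_, by beta_reduce; rw [if_pos h]⟩
            rw [Finset.mem_filter, Finset.mem_Icc]
            exact ⟨⟨by omega, by omega⟩, hbv⟩
          · rw [if_neg (by omega), if_pos (by omega)] at hbv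
            omega
          · rw [if_neg (by omega), if_neg (by omega)] at hbv
            refine ⟨b - 2, ?_, by beta_reduce; rw [if_neg (by omega)]; omega⟩
            rw [Finset.mem_filter, Finset.mem_Icc]
            exact ⟨⟨by omega, by omega⟩, hbv⟩
      rw [← hbij]
      exact hmem.1 v hv1 hvn
    · subst hvn
      have hset : (Finset.Icc 1 (2*(n+1))).filter (fun j => sval (ins σ g) j = n+1)
          = ({g+1, g+2} : Finset ℕ) := by
        ext x
        rw [Finset.mem_filter, Finset.mem_Icc, Finset.mem_insert, Finset.mem_singleton,
          pair_ins σ hg]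
        omega
      rw [hset, Finset.card_insert_of_notMem (by simp), Finset.card_singleton]
  · intro i j k h1 hij hjk hk heq
    by_cases hiv : sval (ins σ g) i = n+1
    · have hi' := (pair_ins σ hg i).mp hiv
      have hk' := (pair_ins σ hg k).mp (heq ▸ hiv)
      omega
    · have hi2 : ¬ (i = g+1 ∨ i = g+2) := fun h => hiv ((pair_ins σ hg i).mpr h)
      have hk2 : ¬ (k = g+1 ∨ k = g+2) :=
        fun h => hiv (heq.trans ((pair_ins σ hg k).mpr h))
      have hconv : ∀ x, ¬(x = g+1 ∨ x = g+2) →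
          sval (ins σ g) x = sval σ (if x ≤ g then x else x - 2) := by
        intro x hx3
        rw [sval_ins σ hg]
        by_cases hc : x ≤ g
        · rw [if_pos hc, if_pos hc]
        · rw [if_neg hc, if_neg (by omega), if_neg hc]
      by_cases hjp : j = g+1 ∨ j = g+2
      · have hjv := (pair_ins σ hg j).mpr hjp
        have hsl := sval_le σ (if i ≤ g then i else i - 2)
        rw [hconv i hi2, hjv]
        omega
      · rw [hconv i hi2, hconv j hjp]
        rw [hconv i hi2, hconv k hk2] at heq
        refine hmem.2 _ _ _ ?_ ?_ ?_ ?_ heq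
        · split_ifs <;> omega
        · split_ifs <;> omega
        · split_ifs <;> omega
        · split_ifs <;> omega

lemma delF_mem {n : ℕ} {τ : Fin (2*(n+1)) → Fin (n+2)} (hτ : τ ∈ StirlingSet (n+1))
    {g : ℕ} (hg : g ≤ 2*n) (hP : ∀ j, sval τ j = n+1 ↔ (j = g+1 ∨ j = g+2)) :
    delF τ ∈ StirlingSet n := by
  have hmem := (mem_stirling_iff τ).mp hτ
  have hD := sval_delF hg hP
  rw [mem_stirling_iff]
  constructor
  · intro v hv1 hv2
    have hbij : ((Finset.Icc 1 (2*n)).filter (fun j => sval (delF τ) j = v)).card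
        = ((Finset.Icc 1 (2*(n+1))).filter (fun j => sval τ j = v)).card := by
      apply Finset.card_bij (fun j _ => if j ≤ g then j else j + 2)
      · intro a ha
        rw [Finset.mem_filter, Finset.mem_Icc] at ha
        obtain ⟨⟨ha1, ha2⟩, hav⟩ := ha
        rw [hD a, if_pos ⟨ha1, ha2⟩] at hav
        beta_reduce
        rw [Finset.mem_filter, Finset.mem_Icc]
        by_cases hc : a ≤ g
        · rw [if_pos hc] at hav ⊢
          exact ⟨⟨by omega, by omega⟩, hav⟩
        · rw [if_neg hc] at hav ⊢
          exact ⟨⟨by omega, by omega⟩, hav⟩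
      · intro a ha b hb hab
        beta_reduce at hab
        split_ifs at hab <;> omega
      · intro b hb
        rw [Finset.mem_filter, Finset.mem_Icc] at hb
        obtain ⟨⟨hb1, hb2⟩, hbv⟩ := hb
        have hbmid : ¬ (b = g+1 ∨ b = g+2) := fun h => by
          rw [(hP b).mpr h] at hbv
          omega
        rcases (by omega : b ≤ g ∨ g+3 ≤ b) with h | h
        · refine ⟨b, ?_, by beta_reduce; rw [if_pos h]⟩
          rw [Finset.mem_filter, Finset.mem_Icc]
          refine ⟨⟨by omega, by omega⟩, ?_⟩
          rw [hD b, if_pos ⟨by omega, by omega⟩, if_pos h]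
          exact hbv
        · refine ⟨b - 2, ?_, by beta_reduce; rw [if_neg (by omega)]; omega⟩
          rw [Finset.mem_filter, Finset.mem_Icc]
          refine ⟨⟨by omega, by omega⟩, ?_⟩
          rw [hD (b-2), if_pos ⟨by omega, by omega⟩, if_neg (by omega),
            show b-2+2 = b by omega]
          exact hbv
    rw [hbij]
    exact hmem.1 v hv1 (by omega)
  · intro i j k h1 hij hjk hk heq
    have key : ∀ x, 1 ≤ x → x ≤ 2*n →
        sval (delF τ) x = sval τ (if x ≤ g then x else x+2) := by
      intro x hx1 hx2
      rw [hD x, if_pos ⟨hx1, hx2⟩]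
      by_cases hc : x ≤ g
      · rw [if_pos hc, if_pos hc]
      · rw [if_neg hc, if_neg hc]
    rw [key i (by omega) (by omega), key j (by omega) (by omega)]
    rw [key i (by omega) (by omega), key k (by omega) hk] at heq
    refine hmem.2 _ _ _ ?_ ?_ ?_ ?_ heq
    · split_ifs <;> omega
    · split_ifs <;> omega
    · split_ifs <;> omega
    · split_ifs <;> omega

lemma KCL {M : Type} [AddCommMonoid M] (n : ℕ) (F : ℕ → M) :
    ∑ τ ∈ StirlingSet (n+1), F (apQ τ) =
      ∑ σ ∈ StirlingSet n,
        ((2 * apQ σ + 1) • F (apQ σ) + (2*n - 2 * apQ σ) • F (apQ σ + 1)) := by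
  have step1 : ∑ τ ∈ StirlingSet (n+1), F (apQ τ)
      = ∑ p ∈ (StirlingSet n) ×ˢ (Finset.range (2*n+1)), F (apQ (ins p.1 p.2)) := by
    apply Finset.sum_nbij' (i := fun τ => (delF τ, gapIdx τ)) (j := fun p => ins p.1 p.2)
    · intro τ hτ
      obtain ⟨g, hg, hP⟩ := pair_of_mem hτ
      rw [Finset.mem_product]
      refine ⟨delF_mem hτ hg hP, ?_⟩
      rw [Finset.mem_range, gapIdx_eq hP]
      omega
    · intro p hp
      rw [Finset.mem_product, Finset.mem_range] at hp
      exact ins_mem hp.1 (by omega)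
    · intro τ hτ
      obtain ⟨g, hg, hP⟩ := pair_of_mem hτ
      show ins (delF τ) (gapIdx τ) = τ
      rw [gapIdx_eq hP]
      exact ins_delF hg hP
    · intro p hp
      rw [Finset.mem_product, Finset.mem_range] at hp
      show (delF (ins p.1 p.2), gapIdx (ins p.1 p.2)) = p
      rw [delF_ins p.1 (show p.2 ≤ 2*n by omega), gap_ins p.1 (show p.2 ≤ 2*n by omega)]
    · intro τ hτ
      obtain ⟨g, hg, hP⟩ := pair_of_mem hτ
      show F (apQ τ) = F (apQ (ins (delF τ) (gapIdx τ)))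
      rw [gapIdx_eq hP, ins_delF hg hP]
  rw [step1, Finset.sum_product]
  apply Finset.sum_congr rfl
  intro σ hσ
  exact sum_gaps hσ F

theorem statement_3
    (D : Derivation ℚ (MvPolynomial (Fin 3) ℚ) (MvPolynomial (Fin 3) ℚ))
    (hx : D (X 0) = X 0 * X 1 * X 2)
    (hy : D (X 1) = X 1 * X 2 ^ 2)
    (hz : D (X 2) = X 1 ^ 2 * X 2) (n : ℕ) :
    (D.toLinearMap ^ n) (X 1) =
      X 1 * ∑ σ ∈ StirlingSet n, X 1 ^ (2 * apQ σ) * X 2 ^ (2 * n - 2 * apQ σ) := by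
  have hDy : ∀ a : ℕ, D (X 1 ^ a) = a • ((X 1 : MvPolynomial (Fin 3) ℚ) ^ a * X 2 ^ 2) := by
    intro a
    cases a with
    | zero => simp
    | succ m =>
      rw [Derivation.leibniz_pow, hy, Nat.add_sub_cancel, smul_eq_mul]
      congr 1
      ring
  have hDz : ∀ b : ℕ, D (X 2 ^ b) = b • ((X 1 : MvPolynomial (Fin 3) ℚ) ^ 2 * X 2 ^ b) := by
    intro b
    cases b with
    | zero => simp
    | succ m =>
      rw [Derivation.leibniz_pow, hz, Nat.add_sub_cancel, smul_eq_mul]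
      congr 1
      ring
  have hDmono : ∀ a b : ℕ, D (X 1 ^ a * X 2 ^ b) =
      a • ((X 1 : MvPolynomial (Fin 3) ℚ) ^ a * X 2 ^ (b+2)) + b • (X 1 ^ (a+2) * X 2 ^ b) := by
    intro a b
    rw [Derivation.leibniz, hDy, hDz, smul_eq_mul, smul_eq_mul, mul_smul_comm, mul_smul_comm]
    have e1 : (X 2 : MvPolynomial (Fin 3) ℚ) ^ b * (X 1 ^ a * X 2 ^ 2) = X 1 ^ a * X 2 ^ (b+2) := by
      ring
    have e2 : (X 1 : MvPolynomial (Fin 3) ℚ) ^ a * (X 1 ^ 2 * X 2 ^ b) = X 1 ^ (a+2) * X 2 ^ b := by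
      ring
    rw [e1, e2, add_comm]
  have hmul : ∀ m : ℕ, (X 1 : MvPolynomial (Fin 3) ℚ) *
        ∑ σ ∈ StirlingSet m, X 1 ^ (2 * apQ σ) * X 2 ^ (2 * m - 2 * apQ σ)
      = ∑ σ ∈ StirlingSet m, X 1 ^ (2 * apQ σ + 1) * X 2 ^ (2 * m - 2 * apQ σ) := by
    intro m
    rw [Finset.mul_sum]
    apply Finset.sum_congr rfl
    intro σ _
    ring
  induction n with
  | zero =>
    rw [pow_zero, Module.End.one_apply]
    have hS0 : StirlingSet 0 = (Finset.univ : Finset (Fin (2*0) → Fin (0+1))) := by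
      unfold StirlingSet
      apply Finset.filter_true_of_mem
      intro σ _
      constructor
      · intro v hv
        exact absurd (by omega : (v : ℕ) = 0) hv
      · intro i
        exact i.elim0
    have hap : ∀ σ : Fin (2*0) → Fin (0+1), apQ σ = 0 := by
      intro σ
      unfold apQ
      rw [Finset.Icc_eq_empty (by omega), Finset.filter_empty, Finset.card_empty]
    rw [hS0]
    rw [Finset.sum_congr rfl (fun σ _ => by rw [hap σ])]
    simp
  | succ n ih =>
    rw [pow_succ', Module.End.mul_apply, ih]
    show D _ = _
    rw [hmul n, map_sum]
    rw [hmul (n+1)]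
    have hF := KCL n (fun c => (X 1 : MvPolynomial (Fin 3) ℚ) ^ (2 * c + 1)
      * X 2 ^ (2 * (n+1) - 2 * c))
    rw [hF]
    apply Finset.sum_congr rfl
    intro σ hσ
    rw [hDmono]
    have ha := apQ_le hσ
    have e1 : 2 * n - 2 * apQ σ + 2 = 2 * (n+1) - 2 * apQ σ := by omega
    have e2 : 2 * (n+1) - 2 * (apQ σ + 1) = 2 * n - 2 * apQ σ := by omega
    have e3 : 2 * (apQ σ + 1) + 1 = 2 * apQ σ + 1 + 2 := by omega
    rw [e1, e2, e3]
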